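/- Fix t ∈ (0, 1/2), α ∈ (0, 1], ρ > 0 and W_max > 0, and let W : ℝ → [0, W_max] satisfy W(x) = 0 for |x| > ρ and ∫_ℝ W(x) dx = 1. There exists a constant C = C(t, α, ρ, W_max) such that for every B with 0 < B ≤ 1: ∫_{−π}^{π} ∫_{−π}^{π} (1/B)·W((θ − λ)/B) · |θ|^{−2t} · |λ − θ|^{α} dλ dθ ≤ C·B^{α}. -/

import Mathlib

open MeasureTheory
open scoped Real

lemma abs_rpow_intervalIntegrable {r : ℝ} (h : -1 < r) (a b : ℝ) :
    IntervalIntegrable (fun x : ℝ => |x| ^ r) volume a b := by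
  suffices H : ∀ c : ℝ, IntervalIntegrable (fun x : ℝ => |x| ^ r) volume 0 c by
    exact (H a).symm.trans (H b)
  have key : ∀ c : ℝ, 0 ≤ c → IntervalIntegrable (fun x : ℝ => |x| ^ r) volume 0 c := by
    intro c hc
    rw [intervalIntegrable_iff, Set.uIoc_of_le hc]
    have h2 := intervalIntegral.intervalIntegrable_rpow' h (a := 0) (b := c)
    rw [intervalIntegrable_iff, Set.uIoc_of_le hc] at h2
    refine h2.congr_fun (fun x hx => ?_) measurableSet_Ioc
    rw [abs_of_pos hx.1]
  intro c
  rcases le_total 0 c with hc | hc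
  · exact key c hc
  · have h3 := key (-c) (by linarith)
    rw [IntervalIntegrable.iff_comp_neg] at h3
    simpa using h3

/-- Double-integral bound for the bandwidth-rescaled kernel against a power singularity and a
Hölder weight: `∫∫ (1/B)W((θ−λ)/B)|θ|^{−2t}|λ−θ|^α dλ dθ ≲ B^α`. -/
theorem stmt_16
    (t α ρ Wmax : ℝ) (ht : t ∈ Set.Ioo (0 : ℝ) (1 / 2)) (hα : α ∈ Set.Ioc (0 : ℝ) 1)
    (hρ : 0 < ρ) (hWmax : 0 < Wmax) :
    ∃ C : ℝ, ∀ W : ℝ → ℝ,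
      (∀ x, W x ∈ Set.Icc (0 : ℝ) Wmax) → (∀ x, ρ < |x| → W x = 0) → (∫ x : ℝ, W x) = 1 →
      ∀ B : ℝ, 0 < B → B ≤ 1 →
        (∫ θ in (-π)..π, ∫ lam in (-π)..π,
            (1 / B) * W ((θ - lam) / B) * |θ| ^ (-2 * t) * |lam - θ| ^ α)
          ≤ C * B ^ α := by
  obtain ⟨ht0, ht2⟩ := ht
  obtain ⟨hα0, hα1⟩ := hα
  have hpi : (-π : ℝ) ≤ π := by linarith [Real.pi_pos]
  refine ⟨2 * Wmax * ρ ^ (1 + α) * (∫ θ in (-π)..π, |θ| ^ (-2 * t)), ?_⟩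
  intro W hWmem hWsupp _ B hB hB1
  have hBne : B ≠ 0 := hB.ne'
  have hρα : (0:ℝ) ≤ ρ ^ (1 + α) := Real.rpow_nonneg hρ.le _
  have hBα : (0:ℝ) ≤ B ^ α := Real.rpow_nonneg hB.le _
  -- inner bound
  have inner_bound : ∀ θ : ℝ,
      (∫ lam in (-π)..π, (1 / B) * W ((θ - lam) / B) * |θ| ^ (-2 * t) * |lam - θ| ^ α)
        ≤ 2 * Wmax * ρ ^ (1 + α) * B ^ α * |θ| ^ (-2 * t) := by
    intro θ
    set c := |θ| ^ (-2 * t) with hc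
    have hc0 : 0 ≤ c := Real.rpow_nonneg (abs_nonneg θ) _
    set G : ℝ → ℝ := Set.indicator (Set.Icc (θ - ρ * B) (θ + ρ * B))
        (fun _ => (1 / B) * Wmax * c * (ρ * B) ^ α) with hG
    have hconst0 : (0:ℝ) ≤ (1 / B) * Wmax * c * (ρ * B) ^ α := by
      have := Real.rpow_nonneg (by positivity : (0:ℝ) ≤ ρ * B) α
      positivity
    have hGnn : ∀ lam, 0 ≤ G lam := fun lam =>
      Set.indicator_nonneg (fun _ _ => hconst0) lam
    have hGint : Integrable G volume := by
      refine IntegrableOn.integrable_indicator ?_ measurableSet_Icc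
      exact integrableOn_const measure_Icc_lt_top.ne
    have hnn : ∀ lam, 0 ≤ (1 / B) * W ((θ - lam) / B) * c * |lam - θ| ^ α := by
      intro lam
      have h1 := (hWmem ((θ - lam) / B)).1
      have h2 : (0:ℝ) ≤ |lam - θ| ^ α := Real.rpow_nonneg (abs_nonneg _) _
      positivity
    have hle : ∀ lam, (1 / B) * W ((θ - lam) / B) * c * |lam - θ| ^ α ≤ G lam := by
      intro lam
      rcases le_or_gt |θ - lam| (ρ * B) with hcase | hcase
      · have hmem : lam ∈ Set.Icc (θ - ρ * B) (θ + ρ * B) := by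
          rw [abs_le] at hcase
          constructor <;> [linarith [hcase.2]; linarith [hcase.1]]
        rw [hG, Set.indicator_of_mem hmem]
        have hW : W ((θ - lam) / B) ≤ Wmax := (hWmem _).2
        have hWnn : 0 ≤ W ((θ - lam) / B) := (hWmem _).1
        have habs : |lam - θ| ^ α ≤ (ρ * B) ^ α := by
          apply Real.rpow_le_rpow (abs_nonneg _) _ hα0.le
          rw [abs_sub_comm]; exact hcase
        have h2 : (0:ℝ) ≤ |lam - θ| ^ α := Real.rpow_nonneg (abs_nonneg _) _
        have h1B : (0:ℝ) ≤ 1 / B := by positivity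
        calc (1 / B) * W ((θ - lam) / B) * c * |lam - θ| ^ α
            ≤ (1 / B) * Wmax * c * |lam - θ| ^ α := by
              apply mul_le_mul_of_nonneg_right _ h2
              apply mul_le_mul_of_nonneg_right _ hc0
              exact mul_le_mul_of_nonneg_left hW h1B
          _ ≤ (1 / B) * Wmax * c * (ρ * B) ^ α := by
              apply mul_le_mul_of_nonneg_left habs
              positivity
      · have hz : W ((θ - lam) / B) = 0 := by
          apply hWsupp
          rw [abs_div, abs_of_pos hB, lt_div_iff₀ hB]
          exact hcase
        rw [hz]
        simpa using hGnn lam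
    have hvol : (volume (Set.Icc (θ - ρ * B) (θ + ρ * B))).toReal = 2 * (ρ * B) := by
      rw [Real.volume_Icc, ENNReal.toReal_ofReal (by nlinarith)]
      ring
    calc (∫ lam in (-π)..π, (1 / B) * W ((θ - lam) / B) * c * |lam - θ| ^ α)
        = ∫ lam in Set.Ioc (-π) π, (1 / B) * W ((θ - lam) / B) * c * |lam - θ| ^ α := by
          rw [intervalIntegral.integral_of_le hpi]
      _ ≤ ∫ lam in Set.Ioc (-π) π, G lam :=
          integral_mono_of_nonneg (Filter.Eventually.of_forall hnn)
            hGint.integrableOn (Filter.Eventually.of_forall hle)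
      _ ≤ ∫ lam, G lam :=
          setIntegral_le_integral hGint (Filter.Eventually.of_forall hGnn)
      _ = (2 * (ρ * B)) * ((1 / B) * Wmax * c * (ρ * B) ^ α) := by
          rw [hG, integral_indicator_const _ measurableSet_Icc, measureReal_def, hvol, smul_eq_mul]
      _ = 2 * Wmax * ρ ^ (1 + α) * B ^ α * c := by
          rw [Real.mul_rpow hρ.le hB.le, Real.rpow_add hρ, Real.rpow_one]
          field_simp
  -- outer bound
  have hKint : IntervalIntegrable
      (fun θ : ℝ => 2 * Wmax * ρ ^ (1 + α) * B ^ α * |θ| ^ (-2 * t)) volume (-π) π :=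
    (abs_rpow_intervalIntegrable (by linarith) (-π) π).const_mul _
  have hKintOn : IntegrableOn
      (fun θ : ℝ => 2 * Wmax * ρ ^ (1 + α) * B ^ α * |θ| ^ (-2 * t))
      (Set.Ioc (-π) π) volume := by
    have := hKint
    rw [intervalIntegrable_iff, Set.uIoc_of_le hpi] at this
    exact this
  have hFnn : ∀ θ : ℝ, 0 ≤ ∫ lam in (-π)..π,
      (1 / B) * W ((θ - lam) / B) * |θ| ^ (-2 * t) * |lam - θ| ^ α := by
    intro θ
    apply intervalIntegral.integral_nonneg hpi
    intro lam _
    have h1 := (hWmem ((θ - lam) / B)).1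
    have h2 : (0:ℝ) ≤ |lam - θ| ^ α := Real.rpow_nonneg (abs_nonneg _) _
    have h3 : (0:ℝ) ≤ |θ| ^ (-2 * t) := Real.rpow_nonneg (abs_nonneg _) _
    positivity
  calc (∫ θ in (-π)..π, ∫ lam in (-π)..π,
          (1 / B) * W ((θ - lam) / B) * |θ| ^ (-2 * t) * |lam - θ| ^ α)
      = ∫ θ in Set.Ioc (-π) π, ∫ lam in (-π)..π,
          (1 / B) * W ((θ - lam) / B) * |θ| ^ (-2 * t) * |lam - θ| ^ α := by
        rw [intervalIntegral.integral_of_le hpi]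
    _ ≤ ∫ θ in Set.Ioc (-π) π, 2 * Wmax * ρ ^ (1 + α) * B ^ α * |θ| ^ (-2 * t) :=
        integral_mono_of_nonneg (Filter.Eventually.of_forall hFnn) hKintOn
          (Filter.Eventually.of_forall inner_bound)
    _ = ∫ θ in (-π)..π, 2 * Wmax * ρ ^ (1 + α) * B ^ α * |θ| ^ (-2 * t) := by
        rw [intervalIntegral.integral_of_le hpi]
    _ = 2 * Wmax * ρ ^ (1 + α) * B ^ α * ∫ θ in (-π)..π, |θ| ^ (-2 * t) := by
        rw [intervalIntegral.integral_const_mul]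
    _ = 2 * Wmax * ρ ^ (1 + α) * (∫ θ in (-π)..π, |θ| ^ (-2 * t)) * B ^ α := by
        ring
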